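/- Fix q ≥ 2 with Hölder conjugate q*, and vectors μ, μ' ∈ R^n with ‖μ − μ'‖_q ≤ τ. Let μ̂ be any vector satisfying ‖μ̂ − μ'‖_q ≤ τ and ‖μ̂‖_{q*} ≤ ‖μ‖_{q*} (e.g., the minimizer of ‖·‖_{q*} over the ℓ_q-ball of radius τ around μ'). Then ‖μ̂ − μ‖_2² ≤ 4·min{ τ·‖μ‖_{q*}, n^{1−1/q}·τ² }. -/

import Mathlib

open scoped BigOperators
open Matrix

noncomputable def lpNorm {n : ℕ} (p : ℝ) (v : Fin n → ℝ) : ℝ :=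
  (∑ i, |v i| ^ p) ^ (1 / p)

theorem stmt19 {n : ℕ} (q qs τ : ℝ) (hq : 2 ≤ q) (hconj : 1 / q + 1 / qs = 1)
    (μ μ' μhat : Fin n → ℝ)
    (h1 : lpNorm q (μ - μ') ≤ τ)
    (h2 : lpNorm q (μhat - μ') ≤ τ)
    (h3 : lpNorm qs μhat ≤ lpNorm qs μ) :
    lpNorm 2 (μhat - μ) ^ 2 ≤ 4 * min (τ * lpNorm qs μ) ((n : ℝ) ^ (1 - 1 / q) * τ ^ 2) := by
  have hq0 : (0:ℝ) < q := by linarith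
  have hq1 : (1:ℝ) < q := by linarith
  have hiq : 1/q ≤ 1/2 := by
    rw [div_le_div_iff₀ hq0 (by norm_num)]; linarith
  have hiq0 : 0 < 1/q := by positivity
  have hiqs : 1/qs = 1 - 1/q := by linarith
  have hiqs0 : 0 < 1/qs := by rw [hiqs]; linarith
  have hqs0 : (0:ℝ) < qs := by
    by_contra h
    push_neg at h
    rcases eq_or_lt_of_le h with h' | h'
    · simp [h'] at hiqs0
    · have : 1/qs < 0 := div_neg_of_pos_of_neg one_pos h'
      linarith
  have hqs1 : (1:ℝ) ≤ qs := by
    have h1qs : 1/qs ≤ 1 := by rw [hiqs]; linarith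
    rwa [div_le_one hqs0] at h1qs
  have hτ : 0 ≤ τ := le_trans (by unfold lpNorm; positivity) h1
  have lp_nonneg : ∀ (p : ℝ) (v : Fin n → ℝ), 0 ≤ lpNorm p v := fun p v => by
    unfold lpNorm; positivity
  have hμqs : 0 ≤ lpNorm qs μ := lp_nonneg qs μ
  -- triangle inequality
  have tri : ∀ (p : ℝ), 1 ≤ p → ∀ u v : Fin n → ℝ,
      lpNorm p (u + v) ≤ lpNorm p u + lpNorm p v := by
    intro p hp u v
    simpa [lpNorm] using Real.Lp_add_le Finset.univ u v hp
  -- lpNorm q (μhat - μ) ≤ 2τ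
  have e1 : μhat - μ = (μhat - μ') + (μ' - μ) := (sub_add_sub_cancel _ _ _).symm
  have hsymm : lpNorm q (μ' - μ) = lpNorm q (μ - μ') := by
    unfold lpNorm
    congr 1
    apply Finset.sum_congr rfl
    intro i _
    rw [Pi.sub_apply, Pi.sub_apply, abs_sub_comm]
  have hxq : lpNorm q (μhat - μ) ≤ 2 * τ := by
    calc lpNorm q (μhat - μ) = lpNorm q ((μhat - μ') + (μ' - μ)) := by rw [← e1]
      _ ≤ lpNorm q (μhat - μ') + lpNorm q (μ' - μ) := tri q (by linarith) _ _
      _ ≤ τ + τ := by rw [hsymm]; exact add_le_add h2 h1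
      _ = 2 * τ := by ring
  -- lpNorm qs (μhat - μ) ≤ 2 * lpNorm qs μ
  have hneg : lpNorm qs (-μ) = lpNorm qs μ := by simp [lpNorm]
  have hxqs : lpNorm qs (μhat - μ) ≤ 2 * lpNorm qs μ := by
    calc lpNorm qs (μhat - μ) = lpNorm qs (μhat + (-μ)) := by rw [sub_eq_add_neg]
      _ ≤ lpNorm qs μhat + lpNorm qs (-μ) := tri qs hqs1 _ _
      _ ≤ lpNorm qs μ + lpNorm qs μ := by rw [hneg]; exact add_le_add h3 le_rfl
      _ = 2 * lpNorm qs μ := by ring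
  set x : Fin n → ℝ := μhat - μ with hx
  have hS2 : lpNorm 2 x ^ 2 = ∑ i, |x i| ^ (2:ℝ) := by
    rw [lpNorm, ← Real.rpow_natCast ((∑ i, |x i| ^ (2:ℝ)) ^ ((1:ℝ)/2)) 2,
      ← Real.rpow_mul (by positivity)]
    norm_num
  have hsq : ∀ y : ℝ, y ^ (2:ℝ) = y * y := by
    intro y
    rw [show (2:ℝ) = ((2:ℕ):ℝ) by norm_num, Real.rpow_natCast]
    ring
  -- Hölder bound
  have hconj' : q.HolderConjugate qs := Real.holderConjugate_iff.mpr ⟨hq1, by simpa [one_div] using hconj⟩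
  have holder : ∑ i, |x i| ^ (2:ℝ) ≤ lpNorm q x * lpNorm qs x := by
    have := Real.inner_le_Lp_mul_Lq_of_nonneg Finset.univ hconj'
      (f := fun i => |x i|) (g := fun i => |x i|)
      (fun i _ => abs_nonneg _) (fun i _ => abs_nonneg _)
    unfold lpNorm
    calc ∑ i, |x i| ^ (2:ℝ) = ∑ i, |x i| * |x i| := by
          apply Finset.sum_congr rfl; intro i _; rw [hsq]
      _ ≤ _ := this
  have boundA : lpNorm 2 x ^ 2 ≤ 4 * (τ * lpNorm qs μ) := by
    rw [hS2]
    calc ∑ i, |x i| ^ (2:ℝ) ≤ lpNorm q x * lpNorm qs x := holder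
      _ ≤ (2 * τ) * (2 * lpNorm qs μ) := by
          apply mul_le_mul hxq hxqs (lp_nonneg qs _) (by linarith)
      _ = 4 * (τ * lpNorm qs μ) := by ring
  -- dimension-dependent bound
  have boundB : lpNorm 2 x ^ 2 ≤ 4 * ((n : ℝ) ^ (1 - 1 / q) * τ ^ 2) := by
    rcases Nat.eq_zero_or_pos n with hn | hn
    · subst hn
      have : lpNorm 2 x = 0 := by
        simp [lpNorm, Real.zero_rpow (by norm_num : (1:ℝ)/2 ≠ 0)]
      rw [this]
      have : (0:ℝ) ^ (1 - 1/q) = 0 := Real.zero_rpow (by linarith)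
      simp only [Nat.cast_zero, this]
      nlinarith [sq_nonneg τ]
    have hn1 : (1:ℝ) ≤ (n:ℝ) := by exact_mod_cast hn
    have hw := Real.inner_le_weight_mul_Lp_of_nonneg Finset.univ
      (p := q/2) (by linarith) (fun _ => (1:ℝ)) (fun i => |x i| ^ (2:ℝ))
      (fun _ => zero_le_one) (fun i => by positivity)
    simp only [one_mul] at hw
    have hcard : ∑ _i : Fin n, (1:ℝ) = (n:ℝ) := by simp
    rw [hcard] at hw
    have hpow : ∀ i : Fin n, (|x i| ^ (2:ℝ)) ^ (q/2) = |x i| ^ q := by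
      intro i
      rw [← Real.rpow_mul (abs_nonneg _)]
      congr 1
      field_simp
    simp only [hpow] at hw
    have hinv : (q/2)⁻¹ = 2/q := by field_simp
    rw [hinv] at hw
    have hSq0 : 0 ≤ ∑ i, |x i| ^ q := by positivity
    have hSq : (∑ i, |x i| ^ q) ^ ((2:ℝ)/q) ≤ (2*τ)^2 := by
      have heq : (∑ i, |x i| ^ q) ^ ((2:ℝ)/q) = (lpNorm q x) ^ (2:ℕ) := by
        rw [lpNorm, ← Real.rpow_natCast ((∑ i, |x i| ^ q) ^ ((1:ℝ)/q)) 2,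
          ← Real.rpow_mul hSq0]
        congr 1
        ring
      rw [heq]
      exact pow_le_pow_left₀ (lp_nonneg q x) hxq 2
    have hnpow : (n:ℝ) ^ (1 - 2/q) ≤ (n:ℝ) ^ (1 - 1/q) := by
      apply Real.rpow_le_rpow_of_exponent_le hn1
      have : 1/q ≤ 2/q := by apply div_le_div_of_nonneg_right <;> linarith
      linarith [this]
    calc lpNorm 2 x ^ 2 = ∑ i, |x i| ^ (2:ℝ) := hS2
      _ ≤ (n:ℝ) ^ (1 - 2/q) * (∑ i, |x i| ^ q) ^ ((2:ℝ)/q) := by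
          exact hw
      _ ≤ (n:ℝ) ^ (1 - 1/q) * (2*τ)^2 := by
          exact mul_le_mul hnpow hSq (Real.rpow_nonneg hSq0 _)
            (Real.rpow_nonneg (Nat.cast_nonneg n) _)
      _ = 4 * ((n:ℝ) ^ (1 - 1/q) * τ^2) := by ring
  rw [mul_min_of_nonneg _ _ (by norm_num : (0:ℝ) ≤ 4)]
  exact le_min boundA boundB
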